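/- arXiv:2312.01400 — 9 statements merged into one kernel-verified Lean document; each statement's English description precedes it below -/
import Mathlib

section
/- Let A and B be real tensors of order m and dimension n. Then {A,B} is an R0 tensor pair if and only if SOL(A,B,q) is a compact subset of ℝ^n × ℝ^n for every q ∈ ℝ^n. -/
open Finset

/-- A real tensor of order `m` and dimension `n`, indexed by a first index in `Fin n`
and `m - 1` further indices in `Fin n`. -/
abbrev Tensor (m n : ℕ) : Type := Fin n → (Fin (m - 1) → Fin n) → ℝ

/-- `tApp A x` is the vector `A x^{m-1}` with `i`-th component
`∑_{i₂,…,i_m} a_{i i₂ … i_m} x_{i₂} ⋯ x_{i_m}`. -/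
noncomputable def tApp {m n : ℕ} (A : Tensor m n) (x : Fin n → ℝ) : Fin n → ℝ :=
  fun i => ∑ j : Fin (m - 1) → Fin n, A i j * ∏ k, x (j k)

/-- The identity tensor: entries `1` when all indices coincide, `0` otherwise,
so that `tApp (idT m n) x = x^{[m-1]}`. -/
def idT (m n : ℕ) : Tensor m n :=
  fun i j => if (∀ k, j k = i) then 1 else 0

/-- The solution set of the horizontal tensor complementarity problem HTCP(A,B,q). -/
def SOL {m n : ℕ} (A B : Tensor m n) (q : Fin n → ℝ) :
    Set ((Fin n → ℝ) × (Fin n → ℝ)) :=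
  {p | p.1 ⊓ p.2 = 0 ∧ tApp A p.1 - tApp B p.2 = q}

/-- `{A,B}` is an R0 tensor pair. -/
def R0Pair {m n : ℕ} (A B : Tensor m n) : Prop :=
  ∀ x y : Fin n → ℝ, x ⊓ y = 0 → tApp A x - tApp B y = 0 → x = 0 ∧ y = 0

/-- `{A,B}` is a P tensor pair. -/
def PPair {m n : ℕ} (A B : Tensor m n) : Prop :=
  ∀ x y : Fin n → ℝ, x * y ≤ 0 → tApp A x - tApp B y = 0 → x = 0 ∧ y = 0

lemma tApp_smul' {m n : ℕ} (A : Tensor m n) (t : ℝ) (x : Fin n → ℝ) :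
    tApp A (t • x) = t ^ (m - 1) • tApp A x := by
  funext i
  simp only [tApp, Pi.smul_apply, smul_eq_mul, Finset.mul_sum]
  refine Finset.sum_congr rfl fun j _ => ?_
  rw [Finset.prod_mul_distrib, Finset.prod_const, Finset.card_univ, Fintype.card_fin]
  ring

lemma continuous_tApp' {m n : ℕ} (A : Tensor m n) : Continuous (tApp A) := by
  refine continuous_pi fun i => continuous_finset_sum _ fun j _ => ?_
  exact continuous_const.mul (continuous_finset_prod _ fun k _ => continuous_apply _)

lemma inf_smul' {n : ℕ} (t : ℝ) (ht : 0 ≤ t) (x y : Fin n → ℝ) :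
    (t • x) ⊓ (t • y) = t • (x ⊓ y) := by
  funext i
  simp only [Pi.inf_apply, Pi.smul_apply, smul_eq_mul]
  rcases le_total (x i) (y i) with h | h
  · rw [min_eq_left h, min_eq_left (mul_le_mul_of_nonneg_left h ht)]
  · rw [min_eq_right h, min_eq_right (mul_le_mul_of_nonneg_left h ht)]

lemma isClosed_SOL' {m n : ℕ} (A B : Tensor m n) (q : Fin n → ℝ) :
    IsClosed (SOL A B q) := by
  have h1 : Continuous fun p : (Fin n → ℝ) × (Fin n → ℝ) => p.1 ⊓ p.2 :=
    continuous_pi fun i =>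
      (((continuous_apply i).comp continuous_fst).min ((continuous_apply i).comp continuous_snd))
  have h2 : Continuous fun p : (Fin n → ℝ) × (Fin n → ℝ) => tApp A p.1 - tApp B p.2 :=
    ((continuous_tApp' A).comp continuous_fst).sub ((continuous_tApp' B).comp continuous_snd)
  have : SOL A B q =
      {p : (Fin n → ℝ) × (Fin n → ℝ) | p.1 ⊓ p.2 = 0} ∩
      {p | tApp A p.1 - tApp B p.2 = q} := rfl
  rw [this]
  exact (isClosed_eq h1 continuous_const).inter (isClosed_eq h2 continuous_const)


/-- `{A,B}` is an R0 tensor pair iff `SOL(A,B,q)` is compact for every `q`. -/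
theorem r0Pair_iff_sol_compact (m n : ℕ) (hm : 2 ≤ m) (hn : 1 ≤ n) (A B : Tensor m n) :
    R0Pair A B ↔ ∀ q : Fin n → ℝ, IsCompact (SOL A B q) := by
  have hm1 : m - 1 ≠ 0 := by omega
  constructor
  · intro hR0 q
    rw [Metric.isCompact_iff_isClosed_bounded]
    refine ⟨isClosed_SOL' A B q, ?_⟩
    by_contra hb
    rw [isBounded_iff_forall_norm_le] at hb
    push_neg at hb
    choose p hpS hpn using fun k : ℕ => hb k
    have hpk_pos : ∀ k, 0 < ‖p k‖ := fun k =>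
      lt_of_le_of_lt (Nat.cast_nonneg k) (hpn k)
    set u : ℕ → (Fin n → ℝ) × (Fin n → ℝ) := fun k => ‖p k‖⁻¹ • p k with hu_def
    have hu : ∀ k, u k ∈ Metric.sphere (0 : (Fin n → ℝ) × (Fin n → ℝ)) 1 := by
      intro k
      simp [hu_def, norm_smul, abs_of_pos (inv_pos.2 (hpk_pos k)),
        inv_mul_cancel₀ (hpk_pos k).ne']
    obtain ⟨v, hv, φ, hφ, hlim⟩ := (isCompact_sphere (0 : (Fin n → ℝ) × (Fin n → ℝ)) 1).tendsto_subseq hu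
    have hnorm_tend : Filter.Tendsto (fun k => ‖p (φ k)‖) Filter.atTop Filter.atTop := by
      refine Filter.tendsto_atTop_mono (fun k => ?_) tendsto_natCast_atTop_atTop
      calc (k : ℝ) ≤ (φ k : ℝ) := by exact_mod_cast hφ.le_apply
        _ ≤ ‖p (φ k)‖ := (hpn (φ k)).le
    have hinv_tend : Filter.Tendsto (fun k => ‖p (φ k)‖⁻¹) Filter.atTop (nhds 0) :=
      hnorm_tend.inv_tendsto_atTop
    -- components of u
    have hu1 : ∀ k, (u k).1 = ‖p k‖⁻¹ • (p k).1 := fun k => rfl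
    have hu2 : ∀ k, (u k).2 = ‖p k‖⁻¹ • (p k).2 := fun k => rfl
    -- first condition
    have hF : Continuous fun p : (Fin n → ℝ) × (Fin n → ℝ) => p.1 ⊓ p.2 :=
      continuous_pi fun i =>
        (((continuous_apply i).comp continuous_fst).min ((continuous_apply i).comp continuous_snd))
    have hFu : ∀ k, (u k).1 ⊓ (u k).2 = 0 := by
      intro k
      rw [hu1, hu2, inf_smul' _ (inv_nonneg.2 (hpk_pos k).le), (hpS k).1, smul_zero]
    have hc1 : v.1 ⊓ v.2 = 0 := by
      have := (hF.tendsto v).comp hlim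
      have heq : (fun k => (u (φ k)).1 ⊓ (u (φ k)).2) = fun _ => (0 : Fin n → ℝ) := by
        funext k; exact hFu (φ k)
      rw [show ((fun p : (Fin n → ℝ) × (Fin n → ℝ) => p.1 ⊓ p.2) ∘ (u ∘ φ)) =
        fun k => (u (φ k)).1 ⊓ (u (φ k)).2 from rfl, heq] at this
      exact tendsto_nhds_unique this tendsto_const_nhds
    -- second condition
    have hG : Continuous fun p : (Fin n → ℝ) × (Fin n → ℝ) => tApp A p.1 - tApp B p.2 :=
      ((continuous_tApp' A).comp continuous_fst).sub ((continuous_tApp' B).comp continuous_snd)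
    have hGu : ∀ k, tApp A (u k).1 - tApp B (u k).2 = (‖p k‖⁻¹) ^ (m - 1) • q := by
      intro k
      rw [hu1, hu2, tApp_smul', tApp_smul', ← smul_sub, (hpS k).2]
    have hc2 : tApp A v.1 - tApp B v.2 = 0 := by
      have h1 : Filter.Tendsto (fun k => tApp A (u (φ k)).1 - tApp B (u (φ k)).2)
          Filter.atTop (nhds (tApp A v.1 - tApp B v.2)) := (hG.tendsto v).comp hlim
      have h2 : Filter.Tendsto (fun k => (‖p (φ k)‖⁻¹) ^ (m - 1) • q)
          Filter.atTop (nhds (0 : Fin n → ℝ)) := by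
        have hp : Filter.Tendsto (fun k => (‖p (φ k)‖⁻¹) ^ (m - 1))
            Filter.atTop (nhds ((0 : ℝ) ^ (m - 1))) := hinv_tend.pow (m - 1)
        rw [zero_pow hm1] at hp
        simpa using hp.smul_const q
      have heq : (fun k => tApp A (u (φ k)).1 - tApp B (u (φ k)).2) =
          fun k => (‖p (φ k)‖⁻¹) ^ (m - 1) • q := by
        funext k; exact hGu (φ k)
      rw [heq] at h1
      exact tendsto_nhds_unique h1 h2
    obtain ⟨h1, h2⟩ := hR0 v.1 v.2 hc1 hc2
    have hv0 : v = 0 := Prod.ext h1 h2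
    rw [hv0] at hv
    simp at hv
  · intro hc x y hxy heq
    by_contra h
    have hxy0 : ((x, y) : (Fin n → ℝ) × (Fin n → ℝ)) ≠ 0 := by
      intro h0
      exact h ⟨congrArg Prod.fst h0, congrArg Prod.snd h0⟩
    have hnorm : 0 < ‖((x, y) : (Fin n → ℝ) × (Fin n → ℝ))‖ := norm_pos_iff.2 hxy0
    obtain ⟨C, hC⟩ := (hc 0).isBounded.exists_norm_le
    set N := ‖((x, y) : (Fin n → ℝ) × (Fin n → ℝ))‖ with hN
    set t : ℝ := (|C| + 1) / N with ht_def
    have ht : 0 < t := div_pos (by positivity) hnorm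
    have hmem : ((t • x, t • y) : (Fin n → ℝ) × (Fin n → ℝ)) ∈ SOL A B 0 := by
      constructor
      · show (t • x) ⊓ (t • y) = 0
        rw [inf_smul' _ ht.le, hxy, smul_zero]
      · show tApp A (t • x) - tApp B (t • y) = 0
        rw [tApp_smul', tApp_smul', ← smul_sub, heq, smul_zero]
    have hle := hC _ hmem
    have hpe : ((t • x, t • y) : (Fin n → ℝ) × (Fin n → ℝ)) = t • ((x, y) :
        (Fin n → ℝ) × (Fin n → ℝ)) := rfl
    rw [hpe, norm_smul, Real.norm_eq_abs, abs_of_pos ht, ht_def,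
      div_mul_cancel₀ _ hnorm.ne'] at hle
    have := le_abs_self C
    linarith
end

section
/- Let B be a real tensor of order m and dimension n. If B is an R0 tensor, then {𝓘, B} is an R0 tensor pair, where 𝓘 is the identity tensor of order m and dimension n. -/
open Finset

/-- `B` is an R0 tensor. -/
def R0Tensor {m n : ℕ} (B : Tensor m n) : Prop :=
  ∀ x : Fin n → ℝ, x ⊓ tApp B x = 0 → x = 0

lemma tApp_idT {m n : ℕ} (x : Fin n → ℝ) (i : Fin n) :
    tApp (idT m n) x i = x i ^ (m - 1) := by
  unfold tApp idT
  rw [Finset.sum_eq_single (fun _ => i)]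
  · simp [Finset.prod_const]
  · intro j _ hj
    have : ¬ ∀ k, j k = i := fun h => hj (funext h)
    simp [this]
  · simp

/-- if `B` is an R0 tensor then `{𝓘, B}` is an R0 tensor pair. -/
theorem r0Pair_of_r0Tensor (m n : ℕ) (hm : 2 ≤ m) (hn : 1 ≤ n) (B : Tensor m n)
    (hB : R0Tensor B) : R0Pair (idT m n) B := by
  intro x y hxy h
  have hm1 : m - 1 ≠ 0 := by omega
  have heq : ∀ i, x i ^ (m - 1) = tApp B y i := by
    intro i
    have := congr_fun h i
    simp only [Pi.sub_apply, Pi.zero_apply, sub_eq_zero] at this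
    rw [← tApp_idT x i, this]
  have hmin : ∀ i, min (x i) (y i) = 0 := by
    intro i
    have := congr_fun hxy i
    simpa using this
  have hxnn : ∀ i, 0 ≤ x i := fun i => (hmin i) ▸ min_le_left (x i) (y i)
  have hynn : ∀ i, 0 ≤ y i := fun i => (hmin i) ▸ min_le_right (x i) (y i)
  have hy0 : y = 0 := by
    apply hB
    funext i
    simp only [Pi.inf_apply, Pi.zero_apply]
    rcases min_eq_iff.mp (hmin i) with ⟨hx0, _⟩ | ⟨hy0, _⟩
    · have : tApp B y i = 0 := by rw [← heq i, hx0, zero_pow hm1]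
      rw [this]; exact min_eq_right (hynn i)
    · have : 0 ≤ tApp B y i := (heq i) ▸ pow_nonneg (hxnn i) _
      rw [hy0]; exact min_eq_left this
  refine ⟨?_, hy0⟩
  funext i
  have hB0 : tApp B y i = 0 := by
    subst hy0
    unfold tApp
    apply Finset.sum_eq_zero
    intro j _
    have : (∏ k, (0 : Fin n → ℝ) (j k)) = 0 := by
      apply Finset.prod_eq_zero (Finset.mem_univ (⟨0, by omega⟩ : Fin (m - 1)))
      rfl
    rw [this, mul_zero]
  have := heq i
  rw [hB0] at this
  simpa using pow_eq_zero_iff hm1 |>.mp this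
end

section
/- Let A and B be real tensors of order m and dimension n and q ∈ ℝ^n. If (x̄, ȳ) is a solution of HTCP(A,B,q), then (x̄, ȳ) is a solution of HLCP(∇(A x̄^{m-1}), ∇(B ȳ^{m-1}), (m−1)q); that is, x̄ ∧ ȳ = 0 and (∇(A x̄^{m-1})) x̄ − (∇(B ȳ^{m-1})) ȳ = (m−1)q. -/
open Finset

lemma hasFDerivAt_tApp {m n : ℕ} (A : Tensor m n) (x : Fin n → ℝ) :
    HasFDerivAt (tApp A)
      (ContinuousLinearMap.pi fun i =>
        ∑ j : Fin (m - 1) → Fin n, A i j •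
          ∑ k, (∏ l ∈ univ.erase k, x (j l)) •
            (ContinuousLinearMap.proj (j k) : (Fin n → ℝ) →L[ℝ] ℝ)) x := by
  rw [show tApp A = fun x i => ∑ j : Fin (m - 1) → Fin n, A i j * ∏ k, x (j k) from rfl]
  rw [hasFDerivAt_pi]
  intro i
  apply HasFDerivAt.fun_sum
  intro j _
  exact (HasFDerivAt.finset_prod (fun k _ => hasFDerivAt_apply (j k) x)).const_mul (A i j)

lemma fderiv_tApp_self {m n : ℕ} (A : Tensor m n) (x : Fin n → ℝ) :
    fderiv ℝ (tApp A) x x = ((m - 1 : ℕ) : ℝ) • tApp A x := by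
  rw [(hasFDerivAt_tApp A x).fderiv]
  funext i
  simp only [ContinuousLinearMap.pi_apply, ContinuousLinearMap.sum_apply,
    ContinuousLinearMap.smul_apply, ContinuousLinearMap.proj_apply, Pi.smul_apply,
    smul_eq_mul, tApp]
  rw [Finset.mul_sum]
  congr 1
  funext j
  have : ∀ k : Fin (m-1), (∏ l ∈ univ.erase k, x (j l)) * x (j k) = ∏ l, x (j l) := by
    intro k
    rw [Finset.prod_erase_mul _ _ (mem_univ k)]
  simp_rw [this]
  rw [Finset.sum_const, card_univ, Fintype.card_fin]
  push_cast
  ring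

/-- a solution of HTCP(A,B,q) solves the linearized
HLCP(∇(A x̄^{m-1}), ∇(B ȳ^{m-1}), (m-1)q). -/
theorem htcp_sol_solves_linearized_hlcp (m n : ℕ) (hm : 2 ≤ m) (hn : 1 ≤ n)
    (A B : Tensor m n) (q xb yb : Fin n → ℝ) (hsol : (xb, yb) ∈ SOL A B q) :
    xb ⊓ yb = 0 ∧
      fderiv ℝ (tApp A) xb xb - fderiv ℝ (tApp B) yb yb = ((m - 1 : ℕ) : ℝ) • q := by
  obtain ⟨h1, h2⟩ := hsol
  refine ⟨h1, ?_⟩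
  rw [fderiv_tApp_self, fderiv_tApp_self, ← smul_sub, h2]
end

section
/- Let m be even, let B be a real tensor of order m and dimension n, let 𝓘 be the identity tensor of order m and dimension n, and let q ∈ ℝ^n. Then (x,y) ∈ ℝ^n × ℝ^n is a solution of HTCP(𝓘,B,q) if and only if x^{[m-1]} = B y^{m-1} + q and y is a solution of TCP(B,q). -/
open Finset

/-- `x` solves the tensor complementarity problem TCP(B,q). -/
def TCPsol {m n : ℕ} (B : Tensor m n) (q x : Fin n → ℝ) : Prop :=
  0 ≤ x ∧ 0 ≤ tApp B x + q ∧ x ⊓ (tApp B x + q) = 0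

/-- for even `m`, `(x,y)` solves HTCP(𝓘,B,q) iff
`x^{[m-1]} = B y^{m-1} + q` and `y` solves TCP(B,q). -/
theorem htcp_id_iff_tcp (m n : ℕ) (hm : 2 ≤ m) (hn : 1 ≤ n) (hme : Even m)
    (B : Tensor m n) (q x y : Fin n → ℝ) :
    (x, y) ∈ SOL (idT m n) B q ↔
      ((fun i => x i ^ (m - 1)) = tApp B y + q ∧ TCPsol B q y) := by
  have hodd : Odd (m - 1) := Nat.Even.sub_odd (by omega) hme odd_one
  have hpos : m - 1 ≠ 0 := by omega
  constructor
  · rintro ⟨hmin, heq⟩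
    simp only at hmin heq
    have heq' : (fun i => x i ^ (m - 1)) = tApp B y + q := by
      funext i
      have := congrFun heq i
      simp [Pi.sub_apply, tApp_idT] at this
      simpa [tApp_idT] using by linarith [this]
    have hxy : ∀ i, min (x i) (y i) = 0 := fun i => congrFun hmin i
    have hx0 : ∀ i, 0 ≤ x i := fun i => by
      have := hxy i; rcases le_total (x i) (y i) with h | h
      · simp [min_eq_left h] at this; simp [this]
      · simp [min_eq_right h] at this; rw [this] at h; exact h
    have hy0 : ∀ i, 0 ≤ y i := fun i => by
      have := hxy i; rcases le_total (x i) (y i) with h | h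
      · simp [min_eq_left h] at this; rw [this] at h; exact h
      · simp [min_eq_right h] at this; simp [this]
    refine ⟨heq', fun i => hy0 i, ?_, ?_⟩
    · intro i
      have : (tApp B y + q) i = x i ^ (m - 1) := (congrFun heq' i).symm
      rw [Pi.zero_apply, this]
      exact pow_nonneg (hx0 i) _
    · funext i
      have hv : (tApp B y + q) i = x i ^ (m - 1) := (congrFun heq' i).symm
      simp only [Pi.inf_apply, Pi.zero_apply, hv]
      have := hxy i
      rcases le_total (x i) (y i) with h | h
      · simp [min_eq_left h] at this
        have hb : (0:ℝ) ≤ x i ^ (m-1) := pow_nonneg (hx0 i) _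
        simp [this, hpos, hb, min_eq_right hb, hy0 i]
      · simp [min_eq_right h] at this
        simp [min_eq_left, this, hy0 i, pow_nonneg (hx0 i)]
  · rintro ⟨heq, hy, hb, hmin⟩
    have hxpow : ∀ i, x i ^ (m - 1) = (tApp B y + q) i := fun i => congrFun heq i
    have hx0 : ∀ i, 0 ≤ x i := fun i => by
      have : (0:ℝ) ≤ x i ^ (m - 1) := by rw [hxpow i]; exact hb i
      exact hodd.pow_nonneg_iff.mp this
    constructor
    · funext i
      simp only [Pi.inf_apply, Pi.zero_apply]
      have hm' : min (y i) ((tApp B y + q) i) = 0 := congrFun hmin i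
      rcases le_total (y i) ((tApp B y + q) i) with h | h
      · rw [min_eq_left h] at hm'
        simp [hm', hx0 i]
      · rw [min_eq_right h] at hm'
        have : x i ^ (m - 1) = 0 := by rw [hxpow i, hm']
        have hx : x i = 0 := by
          exact pow_eq_zero_iff hpos |>.mp this
        simp [hx, hy i]
        exact hy i
    · funext i
      simp only [Pi.sub_apply, tApp_idT, hxpow i]
      simp
end

section
/- Let m be even, let A and B be real tensors of order m and dimension n, and let M be an invertible n×n real matrix that is an order-2 left inverse of A, i.e. M(A x^{m-1}) = x^{[m-1]} for all x ∈ ℝ^n. Then {A,B} is a P tensor pair if and only if the tensor MB is a P tensor, i.e. for all y ∈ ℝ^n, y * M(B y^{m-1}) ≤ 0 implies y = 0. -/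
open Finset

/-- `tApp` of the zero vector is zero (when `m ≥ 2`). -/
lemma tApp_zero {m n : ℕ} (hm : 2 ≤ m) (B : Tensor m n) : tApp B (0 : Fin n → ℝ) = 0 := by
  funext i
  have hne : (0 : ℕ) < m - 1 := by omega
  simp only [tApp, Pi.zero_apply]
  simp [Finset.prod_const, zero_pow (show m - 1 ≠ 0 by omega)]

/-- Odd real root: for odd `k`, `(sign z * |z| ^ (k⁻¹)) ^ k = z`. -/
lemma odd_root_pow {k : ℕ} (hk : Odd k) (z : ℝ) :
    (Real.sign z * |z| ^ ((k : ℝ)⁻¹)) ^ k = z := by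
  have hk0 : (k : ℝ) ≠ 0 := by
    exact_mod_cast Nat.pos_of_ne_zero (by rintro rfl; simp at hk) |>.ne'
  have habs : ∀ w : ℝ, 0 < w → (w ^ ((k : ℝ)⁻¹)) ^ k = w := by
    intro w hw
    rw [← Real.rpow_natCast (w ^ ((k : ℝ)⁻¹)) k, ← Real.rpow_mul hw.le,
      inv_mul_cancel₀ hk0, Real.rpow_one]
  rcases lt_trichotomy z 0 with hz | hz | hz
  · rw [Real.sign_of_neg hz, abs_of_neg hz]
    rw [mul_pow, hk.neg_one_pow, habs _ (by linarith)]
    ring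
  · subst hz; simp [Real.sign_zero, zero_pow (by rintro rfl; simp at hk : k ≠ 0)]
  · rw [Real.sign_of_pos hz, abs_of_pos hz, one_mul, habs _ hz]

/-- for even `m`, if `M` is an invertible order-2 left inverse of `A`,
then `{A,B}` is a P tensor pair iff the tensor `MB` is a P tensor. -/
theorem pPair_iff_MB_pTensor (m n : ℕ) (hm : 2 ≤ m) (hn : 1 ≤ n) (hme : Even m)
    (A B : Tensor m n) (M : Matrix (Fin n) (Fin n) ℝ) (hMinv : IsUnit M)
    (hleft : ∀ x : Fin n → ℝ, M.mulVec (tApp A x) = fun i => x i ^ (m - 1)) :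
    PPair A B ↔ ∀ y : Fin n → ℝ, y * M.mulVec (tApp B y) ≤ 0 → y = 0 := by
  have hodd : Odd (m - 1) := Nat.Even.sub_odd (by omega) hme odd_one
  have hm1 : m - 1 ≠ 0 := by omega
  have hMinj : Function.Injective M.mulVec := Matrix.mulVec_injective_iff_isUnit.2 hMinv
  constructor
  · intro hP y hy
    set z : Fin n → ℝ := M.mulVec (tApp B y) with hz
    set x : Fin n → ℝ := fun i => Real.sign (z i) * |z i| ^ (((m - 1 : ℕ) : ℝ))⁻¹ with hx
    have hxpow : ∀ i, x i ^ (m - 1) = z i := fun i => odd_root_pow hodd (z i)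
    have heq : tApp A x = tApp B y := by
      apply hMinj
      rw [hleft x]
      funext i
      exact hxpow i
    have hxy : x * y ≤ 0 := by
      intro i
      have hyz : y i * z i ≤ 0 := hy i
      simp only [Pi.mul_apply, Pi.zero_apply]
      rcases lt_trichotomy (z i) 0 with h | h | h
      · have hx0 : x i ≤ 0 := by
          rw [hx]; simp only
          rw [Real.sign_of_neg h]
          have : (0:ℝ) ≤ |z i| ^ (((m - 1 : ℕ) : ℝ))⁻¹ := Real.rpow_nonneg (abs_nonneg _) _
          nlinarith
        have hy0 : 0 ≤ y i := by nlinarith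
        exact mul_nonpos_of_nonpos_of_nonneg hx0 hy0
      · have : x i = 0 := by rw [hx]; simp [h, Real.sign_zero]
        simp [this]
      · have hx0 : 0 ≤ x i := by
          rw [hx]; simp only
          rw [Real.sign_of_pos h]
          have : (0:ℝ) ≤ |z i| ^ (((m - 1 : ℕ) : ℝ))⁻¹ := Real.rpow_nonneg (abs_nonneg _) _
          nlinarith
        have hy0 : y i ≤ 0 := by nlinarith
        exact mul_nonpos_of_nonneg_of_nonpos hx0 hy0
    exact (hP x y hxy (by rw [heq]; simp)).2
  · intro hMB x y hxy hAB
    have heq : tApp A x = tApp B y := by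
      have := sub_eq_zero.mp hAB
      exact this
    have hzx : M.mulVec (tApp B y) = fun i => x i ^ (m - 1) := by
      rw [← heq]; exact hleft x
    have hy0 : y = 0 := by
      apply hMB y
      intro i
      simp only [Pi.mul_apply, Pi.zero_apply, hzx]
      have hxyi : x i * y i ≤ 0 := hxy i
      rcases le_or_gt (x i) 0 with h | h
      · have hp : x i ^ (m - 1) ≤ 0 := hodd.pow_nonpos h
        have : 0 ≤ y i ∨ x i = 0 := by
          rcases lt_or_eq_of_le h with h' | h'
          · left; nlinarith
          · right; exact h'
        rcases this with h' | h'
        · exact mul_nonpos_of_nonneg_of_nonpos h' hp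
        · simp [h', zero_pow hm1]
      · have hp : 0 ≤ x i ^ (m - 1) := pow_nonneg h.le _
        have hy' : y i ≤ 0 := by nlinarith
        exact mul_nonpos_of_nonpos_of_nonneg hy' hp
    subst hy0
    have hx0 : (fun i => x i ^ (m - 1)) = (0 : Fin n → ℝ) := by
      rw [← hzx, tApp_zero hm, Matrix.mulVec_zero]
    refine ⟨funext fun i => ?_, rfl⟩
    have := congrFun hx0 i
    simpa [pow_eq_zero_iff hm1] using this
end

section
/- Let m be even and let A and B be real tensors of order m and dimension n. If {A,B} is a P tensor pair, then A has no negative B-eigenvalue; that is, if λ ∈ ℝ and x ∈ ℝ^n is nonzero with A x^{m-1} − λ B x^{m-1} = 0, then λ ≥ 0. -/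
open Finset

/-- for even `m`, a P tensor pair `{A,B}` admits no negative
B-eigenvalue of `A`. -/
theorem pPair_no_negative_B_eigenvalue (m n : ℕ) (hm : 2 ≤ m) (hn : 1 ≤ n)
    (hme : Even m) (A B : Tensor m n) (h : PPair A B) :
    ∀ (l : ℝ) (x : Fin n → ℝ), x ≠ 0 → tApp A x - l • tApp B x = 0 → 0 ≤ l := by
  intro l x hx hAx
  by_contra hl
  push_neg at hl
  -- m - 1 is odd
  have hodd : Odd (m - 1) := by
    obtain ⟨k, rfl⟩ := hme
    have hk : 1 ≤ k := by omega
    exact ⟨k - 1, by omega⟩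
  -- build μ with μ ^ (m-1) = l
  set μ : ℝ := -((-l) ^ (((m : ℝ) - 1)⁻¹)) with hμdef
  have hlpos : (0:ℝ) < -l := by linarith
  have hm1 : (0:ℝ) < (m : ℝ) - 1 := by
    have : (2:ℝ) ≤ (m:ℝ) := by exact_mod_cast hm
    linarith
  have hcast : ((m - 1 : ℕ) : ℝ) = (m : ℝ) - 1 := by
    have : 1 ≤ m := by omega
    push_cast [this]; ring
  have hμpow : μ ^ (m - 1) = l := by
    rw [hμdef, hodd.neg_pow, ← Real.rpow_natCast ((-l) ^ (((m:ℝ)-1)⁻¹)) (m-1),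
      ← Real.rpow_mul hlpos.le, hcast, inv_mul_cancel₀ (ne_of_gt hm1), Real.rpow_one]
    ring
  have hμneg : μ < 0 := by
    rw [hμdef, neg_lt_zero]
    exact Real.rpow_pos_of_pos hlpos _
  -- homogeneity of tApp
  have hhom : tApp B (μ • x) = (μ ^ (m - 1)) • tApp B x := by
    funext i
    simp only [tApp, Pi.smul_apply, smul_eq_mul, Finset.mul_sum]
    refine Finset.sum_congr rfl fun j _ => ?_
    rw [Finset.prod_mul_distrib, Finset.prod_const, Finset.card_univ, Fintype.card_fin]
    ring
  have hAy : tApp A x - tApp B (μ • x) = 0 := by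
    rw [hhom, hμpow]; exact hAx
  have hxy : x * (μ • x) ≤ 0 := by
    intro i
    simp only [Pi.mul_apply, Pi.smul_apply, smul_eq_mul, Pi.zero_apply]
    nlinarith [sq_nonneg (x i)]
  obtain ⟨hx0, -⟩ := h x (μ • x) hxy hAy
  exact hx hx0
end

section
/- Let m be even and let A and B be real tensors of order m and dimension n. Then {A,B} is a P tensor pair if and only if for all n×n diagonal matrices D1, D2 with nonnegative diagonal entries satisfying (D1)_{ii} + (D2)_{ii} > 0 for every i, the only x ∈ ℝ^n with A(D1 x)^{m-1} + B(D2 x)^{m-1} = 0 is x = 0. -/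
open Finset

lemma isDiag_mulVec {n : ℕ} {D : Matrix (Fin n) (Fin n) ℝ} (h : D.IsDiag)
    (x : Fin n → ℝ) (i : Fin n) : D.mulVec x i = D i i * x i := by
  unfold Matrix.mulVec dotProduct
  rw [Finset.sum_eq_single i]
  · intro b _ hb
    show D i b * x b = 0
    rw [h (Ne.symm hb), zero_mul]
  · intro hi; exact absurd (Finset.mem_univ i) hi

lemma tApp_neg {m n : ℕ} (hodd : Odd (m - 1)) (A : Tensor m n) (w : Fin n → ℝ) :
    tApp A (-w) = - tApp A w := by
  funext i
  simp only [tApp, Pi.neg_apply]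
  rw [← Finset.sum_neg_distrib]
  refine Finset.sum_congr rfl fun j _ => ?_
  have hp : ∏ k, -w (j k) = (-1 : ℝ) ^ (m - 1) * ∏ k, w (j k) := by
    calc ∏ k, -w (j k) = ∏ k, (-1 : ℝ) * w (j k) := by simp [neg_one_mul]
      _ = (∏ _k : Fin (m - 1), (-1 : ℝ)) * ∏ k, w (j k) := Finset.prod_mul_distrib
      _ = (-1 : ℝ) ^ (m - 1) * ∏ k, w (j k) := by simp
  rw [hp, hodd.neg_one_pow]
  ring

/-- for even `m`, `{A,B}` is a P tensor pair iff for all nonnegative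
diagonal matrices `D1, D2` with `(D1)_{ii} + (D2)_{ii} > 0` for all `i`, the only
solution of `A(D1 x)^{m-1} + B(D2 x)^{m-1} = 0` is `x = 0`. -/
theorem pPair_iff_diagonal (m n : ℕ) (hm : 2 ≤ m) (hn : 1 ≤ n) (hme : Even m)
    (A B : Tensor m n) :
    PPair A B ↔
      ∀ D1 D2 : Matrix (Fin n) (Fin n) ℝ, D1.IsDiag → D2.IsDiag →
        (∀ i, 0 ≤ D1 i i) → (∀ i, 0 ≤ D2 i i) → (∀ i, 0 < D1 i i + D2 i i) →
        ∀ x : Fin n → ℝ, tApp A (D1.mulVec x) + tApp B (D2.mulVec x) = 0 → x = 0 := by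
  have hodd : Odd (m - 1) := Nat.Even.sub_odd (le_trans one_le_two hm) hme odd_one
  constructor
  · intro hP D1 D2 hd1 hd2 hn1 hn2 hpos x hx
    set u : Fin n → ℝ := D1.mulVec x with hu
    set w : Fin n → ℝ := D2.mulVec x with hw
    have h1 : u * (-w) ≤ 0 := by
      intro i
      simp only [Pi.mul_apply, Pi.neg_apply, Pi.zero_apply, hu, hw,
        isDiag_mulVec hd1, isDiag_mulVec hd2]
      nlinarith [mul_nonneg (mul_nonneg (hn1 i) (hn2 i)) (sq_nonneg (x i))]
    have h2 : tApp A u - tApp B (-w) = 0 := by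
      rw [tApp_neg hodd, sub_neg_eq_add, hx]
    obtain ⟨hu0, hw0⟩ := hP u (-w) h1 h2
    funext i
    have e1 : D1 i i * x i = 0 := by
      have := congrFun hu0 i
      simpa [hu, isDiag_mulVec hd1] using this
    have e2 : D2 i i * x i = 0 := by
      have := congrFun hw0 i
      have : w i = 0 := congrFun (neg_eq_zero.mp hw0) i
      simpa [hw, isDiag_mulVec hd2] using this
    by_contra hxi
    have h1' : D1 i i = 0 := by
      rcases mul_eq_zero.mp e1 with h | h
      · exact h
      · exact absurd h hxi
    have h2' : D2 i i = 0 := by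
      rcases mul_eq_zero.mp e2 with h | h
      · exact h
      · exact absurd h hxi
    have := hpos i
    rw [h1', h2'] at this
    linarith
  · intro h x y hxy heq
    set z : Fin n → ℝ := x - y with hz
    have hzero : ∀ i, z i = 0 → x i = 0 ∧ y i = 0 := by
      intro i hzi
      have hxyi : x i * y i ≤ 0 := hxy i

      have : x i = y i := by
        have := congrFun (rfl : z = x - y) i
        simp [hz] at hzi
        linarith [hzi]
      constructor <;> nlinarith
    set d1 : Fin n → ℝ := fun i => if z i = 0 then 1 else x i / z i with hd1
    set d2 : Fin n → ℝ := fun i => if z i = 0 then 1 else -y i / z i with hd2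
    have hmv1 : (Matrix.diagonal d1).mulVec z = x := by
      funext i
      rw [Matrix.mulVec_diagonal]
      by_cases hzi : z i = 0
      · simp [hd1, hzi, (hzero i hzi).1]
      · simp [hd1, hzi]
    have hmv2 : (Matrix.diagonal d2).mulVec z = -y := by
      funext i
      rw [Matrix.mulVec_diagonal]
      by_cases hzi : z i = 0
      · simp [hd2, hzi, (hzero i hzi).2]
      · simp [hd2, hzi]
    have hxz : ∀ i, 0 ≤ x i * z i := by
      intro i
      have hh : x i * y i ≤ 0 := hxy i
      simp only [hz, Pi.sub_apply]
      nlinarith [sq_nonneg (x i)]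
    have hyz : ∀ i, 0 ≤ (-y i) * z i := by
      intro i
      have hh : x i * y i ≤ 0 := hxy i
      simp only [hz, Pi.sub_apply]
      nlinarith [sq_nonneg (y i)]
    have hn1 : ∀ i, 0 ≤ (Matrix.diagonal d1) i i := by
      intro i
      rw [Matrix.diagonal_apply_eq]
      by_cases hzi : z i = 0
      · simp [hd1, hzi]
      · simp only [hd1, hzi, if_false]
        have : x i / z i = (x i * z i) / (z i ^ 2) := by
          field_simp
        rw [this]
        exact div_nonneg (hxz i) (sq_nonneg _)
    have hn2 : ∀ i, 0 ≤ (Matrix.diagonal d2) i i := by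
      intro i
      rw [Matrix.diagonal_apply_eq]
      by_cases hzi : z i = 0
      · simp [hd2, hzi]
      · simp only [hd2, hzi, if_false]
        have : -y i / z i = ((-y i) * z i) / (z i ^ 2) := by
          field_simp
        rw [this]
        exact div_nonneg (hyz i) (sq_nonneg _)
    have hpos : ∀ i, 0 < (Matrix.diagonal d1) i i + (Matrix.diagonal d2) i i := by
      intro i
      rw [Matrix.diagonal_apply_eq, Matrix.diagonal_apply_eq]
      by_cases hzi : z i = 0
      · simp [hd1, hd2, hzi]
      · simp only [hd1, hd2, hzi, if_false]
        have : x i / z i + -y i / z i = 1 := by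
          rw [← add_div]
          have : x i + -y i = z i := by simp [hz]; ring
          rw [this, div_self hzi]
        rw [this]; exact one_pos
    have heq' : tApp A ((Matrix.diagonal d1).mulVec z)
        + tApp B ((Matrix.diagonal d2).mulVec z) = 0 := by
      rw [hmv1, hmv2, tApp_neg hodd, ← sub_eq_add_neg]
      exact heq
    have hz0 : z = 0 := h (Matrix.diagonal d1) (Matrix.diagonal d2)
      (Matrix.isDiag_diagonal d1) (Matrix.isDiag_diagonal d2) hn1 hn2 hpos z heq'
    have hxeq : ∀ i, x i = y i := by
      intro i
      have := congrFun hz0 i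
      simp [hz] at this
      linarith [this]
    constructor <;>
      (funext i
       have hh : x i * y i ≤ 0 := hxy i
       have h2 := hxeq i
       show _ = (0 : ℝ)
       nlinarith)
end

section
/- Let A and B be the real tensors of order 3 and dimension 2 with entries a_{111} = a_{122} = 1, b_{111} = b_{122} = −1 and all other entries 0. Then {A,B} is a P tensor pair, and yet A x^{2} + B x^{2} = 0 for every x ∈ ℝ^2; in particular, taking D1 = D2 = I (the 2×2 identity matrix, so (D1)_{ii} + (D2)_{ii} > 0 for all i), the equation A(D1 x)^{2} + B(D2 x)^{2} = 0 has nonzero solutions, so the determinant characterization of P tensor pairs fails for odd order. -/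
open Finset

/-- The order-3, dimension-2 tensor with `a₁₁₁ = a₁₂₂ = 1` and all other entries `0`. -/
def exA : Tensor 3 2 :=
  fun i j => if i = 0 ∧ ((j 0 = 0 ∧ j 1 = 0) ∨ (j 0 = 1 ∧ j 1 = 1)) then 1 else 0

/-- The order-3, dimension-2 tensor with `b₁₁₁ = b₁₂₂ = -1` and all other entries `0`. -/
def exB : Tensor 3 2 :=
  fun i j => if i = 0 ∧ ((j 0 = 0 ∧ j 1 = 0) ∨ (j 0 = 1 ∧ j 1 = 1)) then -1 else 0


lemma sum_pi2 (f : (Fin 2 → Fin 2) → ℝ) :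
    ∑ j : Fin 2 → Fin 2, f j = f ![0,0] + f ![0,1] + f ![1,0] + f ![1,1] := by
  rw [← (piFinTwoEquiv fun _ => Fin 2).symm.sum_comp]
  rw [Fintype.sum_prod_type]
  have h : ∀ a b : Fin 2, (Fin.cons a (Fin.cons b finZeroElim) : Fin 2 → Fin 2) = ![a,b] := by
    intro a b; funext k; fin_cases k <;> rfl
  simp only [Fin.sum_univ_two, piFinTwoEquiv_symm_apply, h]
  ring

lemma tApp_exA (x : Fin 2 → ℝ) (i : Fin 2) :
    tApp exA x i = if i = 0 then x 0 * x 0 + x 1 * x 1 else 0 := by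
  show (∑ j : Fin 2 → Fin 2, exA i j * ∏ k, x (j k)) = _
  rw [sum_pi2]
  fin_cases i <;> simp [exA, Fin.prod_univ_two]

lemma tApp_exB (x : Fin 2 → ℝ) (i : Fin 2) :
    tApp exB x i = if i = 0 then -(x 0 * x 0 + x 1 * x 1) else 0 := by
  show (∑ j : Fin 2 → Fin 2, exB i j * ∏ k, x (j k)) = _
  rw [sum_pi2]
  fin_cases i <;> simp [exB, Fin.prod_univ_two] <;> ring

/-- `{exA, exB}` is a P tensor pair of odd order, yet
`A x² + B x² = 0` for all `x`; taking `D1 = D2 = I`, the equation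
`A(D1 x)² + B(D2 x)² = 0` has nonzero solutions, so the determinant
characterization of P tensor pairs fails for odd order. -/
theorem odd_order_counterexample :
    PPair exA exB ∧ (∀ x : Fin 2 → ℝ, tApp exA x + tApp exB x = 0) ∧
      ∃ x : Fin 2 → ℝ, x ≠ 0 ∧
        tApp exA ((1 : Matrix (Fin 2) (Fin 2) ℝ).mulVec x) +
          tApp exB ((1 : Matrix (Fin 2) (Fin 2) ℝ).mulVec x) = 0 := by
  refine ⟨?_, ?_, ?_⟩
  · intro x y _ heq
    have h0 := congrFun heq 0
    simp only [Pi.sub_apply, Pi.zero_apply, tApp_exA, tApp_exB, if_pos rfl, if_true] at h0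
    have hx0 : x 0 = 0 ∧ x 1 = 0 ∧ y 0 = 0 ∧ y 1 = 0 := by
      constructor; nlinarith [sq_nonneg (x 0), sq_nonneg (x 1), sq_nonneg (y 0), sq_nonneg (y 1)]
      constructor; nlinarith [sq_nonneg (x 0), sq_nonneg (x 1), sq_nonneg (y 0), sq_nonneg (y 1)]
      constructor; nlinarith [sq_nonneg (x 0), sq_nonneg (x 1), sq_nonneg (y 0), sq_nonneg (y 1)]
      nlinarith [sq_nonneg (x 0), sq_nonneg (x 1), sq_nonneg (y 0), sq_nonneg (y 1)]
    constructor <;> funext i <;> fin_cases i <;>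
      simp [hx0.1, hx0.2.1, hx0.2.2.1, hx0.2.2.2]
  · intro x
    funext i
    simp only [Pi.add_apply, Pi.zero_apply, tApp_exA, tApp_exB]
    split <;> ring
  · refine ⟨fun _ => 1, ?_, ?_⟩
    · intro h
      have := congrFun h 0
      simp at this
    · rw [Matrix.one_mulVec]
      funext i
      simp only [Pi.add_apply, Pi.zero_apply, tApp_exA, tApp_exB]
      split <;> ring
end

section
/- Let A and B be real tensors of order m and dimension n with m ≥ 2 and n ≥ 1. If {A,B} is a strong P tensor pair, then m is even. -/
open Finset

/-- `{A,B}` is a strong P tensor pair. -/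
def StrongPPair {m n : ℕ} (A B : Tensor m n) : Prop :=
  ∀ x1 x2 y1 y2 : Fin n → ℝ,
    (x1 - x2) * (y1 - y2) ≤ 0 →
    (tApp A x1 - tApp A x2) - (tApp B y1 - tApp B y2) = 0 →
    x1 = x2 ∧ y1 = y2

/-- a strong P tensor pair has even order. -/
theorem even_of_strongPPair (m n : ℕ) (hm : 2 ≤ m) (hn : 1 ≤ n)
    (A B : Tensor m n) (h : StrongPPair A B) : Even m := by
  by_contra hodd
  have hOdd : Odd m := Nat.odd_iff.mpr (Nat.not_even_iff.mp hodd)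
  have hme : Even (m - 1) := by
    obtain ⟨k, hk⟩ := hOdd
    exact ⟨k, by omega⟩
  have hEq : tApp A (fun _ => (1 : ℝ)) = tApp A (fun _ => (-1 : ℝ)) := by
    funext i
    unfold tApp
    congr 1
    funext j
    congr 1
    simp [Finset.prod_const, hme.neg_one_pow]
  have := h (fun _ => (1 : ℝ)) (fun _ => (-1 : ℝ)) 0 0 (by simp) (by
    rw [hEq]; simp)
  have h1 := congrFun this.1 ⟨0, hn⟩
  norm_num at h1
end
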